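/- Let α be a nonempty finite set and let μ, ν be probability measures on α. Then there exists an optimal coupling of μ and ν: a probability measure π on α × α whose first marginal is μ and whose second marginal is ν, satisfying π({(a,b) : a ≠ b}) = d_TV(μ, ν). Moreover, every coupling π' of μ and ν satisfies π'({(a,b) : a ≠ b}) ≥ d_TV(μ, ν), so the optimal coupling achieves the infimum inf_{π ∈ M} π(ξ_1 ≠ ξ_2) over the set M of all couplings of μ and ν. -/

import Mathlib

open MeasureTheory

/-- The total variation distance between two (probability) measures on a finite
space: `d_TV(μ, ν) = sup_S |μ(S) − ν(S)|`, the supremum over all subsets `S`. -/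
noncomputable def dTV {α : Type*} [MeasurableSpace α] (μ ν : Measure α) : ℝ :=
  ⨆ S : Set α, |(μ S).toReal - (ν S).toReal|

/-- `π` is a coupling of `μ` and `ν`: a probability measure on `α × α` whose first
marginal is `μ` and whose second marginal is `ν`. -/
def IsCoupling {α : Type*} [MeasurableSpace α] (π : Measure (α × α))
    (μ ν : Measure α) : Prop :=
  IsProbabilityMeasure π ∧ π.map Prod.fst = μ ∧ π.map Prod.snd = ν

open scoped ENNReal

section Aux

variable {β : Type*} [Fintype β] [MeasurableSpace β] [DiscreteMeasurableSpace β]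

lemma meas_eq_sum (μ : Measure β) (S : Set β) :
    μ S = ∑ a ∈ S.toFinite.toFinset, μ {a} := by
  classical
  have h : S = ⋃ a ∈ S.toFinite.toFinset, ({a} : Set β) := by
    rw [← Finset.set_biUnion_coe, Set.Finite.coe_toFinset, Set.biUnion_of_singleton]
  conv_lhs => rw [h]
  rw [measure_biUnion_finset ?_ fun b _ => .of_discrete]
  intro a _ b _ hab
  simp [Function.onFun, hab]

lemma meas_univ_eq_sum (μ : Measure β) : μ Set.univ = ∑ a : β, μ {a} := by
  rw [meas_eq_sum]
  refine Finset.sum_congr ?_ fun _ _ => rfl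
  ext a; simp [Set.Finite.mem_toFinset]

lemma bddAbove_dTV (μ ν : Measure β) [IsProbabilityMeasure μ] [IsProbabilityMeasure ν] :
    BddAbove (Set.range fun S : Set β => |(μ S).toReal - (ν S).toReal|) := by
  refine ⟨1, ?_⟩
  rintro x ⟨S, rfl⟩
  have h1 : (μ S).toReal ≤ 1 := by
    simpa using ENNReal.toReal_mono ENNReal.one_ne_top prob_le_one
  have h2 : (ν S).toReal ≤ 1 := by
    simpa using ENNReal.toReal_mono ENNReal.one_ne_top prob_le_one
  have h3 : (0:ℝ) ≤ (μ S).toReal := ENNReal.toReal_nonneg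
  have h4 : (0:ℝ) ≤ (ν S).toReal := ENNReal.toReal_nonneg
  rw [abs_sub_le_iff]
  constructor <;> linarith

lemma dTV_nonneg (μ ν : Measure β) [IsProbabilityMeasure μ] [IsProbabilityMeasure ν] :
    0 ≤ dTV μ ν := by
  have := le_ciSup (bddAbove_dTV μ ν) (∅ : Set β)
  simp at this; exact this

lemma dTV_le_coupling (μ ν : Measure β) [IsProbabilityMeasure μ] [IsProbabilityMeasure ν]
    (π' : Measure (β × β)) (h : IsCoupling π' μ ν) :
    dTV μ ν ≤ (π' {p : β × β | p.1 ≠ p.2}).toReal := by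
  obtain ⟨hπ, hfst, hsnd⟩ := h
  haveI := hπ
  apply ciSup_le
  intro S
  have hSm : MeasurableSet S := .of_discrete
  have hA : μ S = π' (Prod.fst ⁻¹' S) := by
    rw [← hfst, Measure.map_apply measurable_fst hSm]
  have hB : ν S = π' (Prod.snd ⁻¹' S) := by
    rw [← hsnd, Measure.map_apply measurable_snd hSm]
  have key : ∀ A B : Set (β × β), (∀ x ∈ A, x ∉ B → x.1 ≠ x.2) →
      (π' A).toReal ≤ (π' B).toReal + (π' {p : β × β | p.1 ≠ p.2}).toReal := by
    intro A B hAB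
    have hle : π' A ≤ π' B + π' {p : β × β | p.1 ≠ p.2} := by
      refine le_trans (measure_mono ?_) (measure_union_le _ _)
      intro x hx
      by_cases h2 : x ∈ B
      · exact Or.inl h2
      · exact Or.inr (hAB x hx h2)
    rw [← ENNReal.toReal_add (measure_ne_top _ _) (measure_ne_top _ _)]
    exact ENNReal.toReal_mono
      (ENNReal.add_ne_top.2 ⟨measure_ne_top _ _, measure_ne_top _ _⟩) hle
  have k1 := key (Prod.fst ⁻¹' S) (Prod.snd ⁻¹' S) ?_
  have k2 := key (Prod.snd ⁻¹' S) (Prod.fst ⁻¹' S) ?_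
  · rw [abs_sub_le_iff, hA, hB]
    constructor <;> linarith
  · intro x hx h2 he
    exact h2 (by simpa [Set.mem_preimage, he] using hx)
  · intro x hx h2 he
    exact h2 (by simpa [Set.mem_preimage, ← he] using hx)

end Aux

/-- For probability measures `μ, ν` on a nonempty finite set `α` there exists an
optimal coupling: a coupling `π` of `μ` and `ν` with
`π({(a,b) : a ≠ b}) = d_TV(μ, ν)`; moreover every coupling `π'` of `μ` and `ν`
satisfies `π'({(a,b) : a ≠ b}) ≥ d_TV(μ, ν)`, so the optimal coupling achieves
the infimum over all couplings. -/
theorem exists_optimal_coupling {α : Type*} [Fintype α] [Nonempty α]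
    [MeasurableSpace α] [DiscreteMeasurableSpace α]
    (μ ν : Measure α) (hμ : IsProbabilityMeasure μ) (hν : IsProbabilityMeasure ν) :
    ∃ π : Measure (α × α), IsCoupling π μ ν ∧
      (π {p : α × α | p.1 ≠ p.2}).toReal = dTV μ ν ∧
      ∀ π' : Measure (α × α), IsCoupling π' μ ν →
        dTV μ ν ≤ (π' {p : α × α | p.1 ≠ p.2}).toReal := by
  classical
  haveI := hμ; haveI := hν
  haveI : DiscreteMeasurableSpace (α × α) := ⟨fun s => s.to_countable.measurableSet⟩
  set c : α → ℝ≥0∞ := fun a => min (μ {a}) (ν {a}) with hc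
  set m : ℝ≥0∞ := ∑ a : α, c a with hmdef
  have hμa : ∀ a : α, μ {a} ≠ ∞ := fun a => measure_ne_top μ _
  have hνa : ∀ a : α, ν {a} ≠ ∞ := fun a => measure_ne_top ν _
  have hca : ∀ a : α, c a ≠ ∞ := fun a => ne_top_of_le_ne_top (hμa a) (min_le_left _ _)
  have hsumμ : ∑ a : α, μ {a} = 1 := by rw [← meas_univ_eq_sum]; exact measure_univ
  have hsumν : ∑ a : α, ν {a} = 1 := by rw [← meas_univ_eq_sum]; exact measure_univ
  -- the measure p with p {a} = min (μ {a}) (ν {a})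
  set p : Measure α := ∑ a : α, c a • Measure.dirac a with hpdef
  have hpapp : ∀ S : Set α, p S = ∑ a ∈ S.toFinite.toFinset, c a := by
    intro S
    rw [hpdef, Measure.finset_sum_apply]
    have hterm : ∀ a : α, (c a • Measure.dirac a) S = if a ∈ S then c a else 0 := by
      intro a
      rw [Measure.smul_apply, Measure.dirac_apply' _ .of_discrete, smul_eq_mul,
        Set.indicator_apply]
      split <;> simp
    rw [Finset.sum_congr rfl fun a _ => hterm a, ← Finset.sum_filter]
    refine Finset.sum_congr ?_ fun _ _ => rfl
    ext a
    simp only [Finset.mem_filter, Finset.mem_univ, true_and, Set.Finite.mem_toFinset]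
  have hpuniv : p Set.univ = m := by
    rw [hpapp, hmdef]
    refine Finset.sum_congr ?_ fun _ _ => rfl
    ext a; simp [Set.Finite.mem_toFinset]
  have hpμ : p ≤ μ := by
    rw [Measure.le_iff]
    intro S _
    rw [hpapp, meas_eq_sum μ S]
    exact Finset.sum_le_sum fun a _ => min_le_left _ _
  have hpν : p ≤ ν := by
    rw [Measure.le_iff]
    intro S _
    rw [hpapp, meas_eq_sum ν S]
    exact Finset.sum_le_sum fun a _ => min_le_right _ _
  haveI hpfin : IsFiniteMeasure p := by
    constructor
    calc p Set.univ ≤ μ Set.univ := Measure.le_iff'.1 hpμ _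
    _ < ∞ := by simp
  have hm1 : m ≤ 1 := by
    rw [← hpuniv]
    calc p Set.univ ≤ μ Set.univ := Measure.le_iff'.1 hpμ _
    _ = 1 := measure_univ
  have hmtop : m ≠ ∞ := ne_top_of_le_ne_top ENNReal.one_ne_top hm1
  -- real-valued versions
  set f : α → ℝ := fun a => (μ {a}).toReal with hf
  set g : α → ℝ := fun a => (ν {a}).toReal with hg
  have hcR : ∀ a : α, (c a).toReal = min (f a) (g a) := fun a =>
    ENNReal.toReal_min (hμa a) (hνa a)
  have hfsum : ∑ a : α, f a = 1 := by
    rw [hf, ← ENNReal.toReal_sum fun a _ => hμa a, hsumμ, ENNReal.toReal_one]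
  have hgsum : ∑ a : α, g a = 1 := by
    rw [hg, ← ENNReal.toReal_sum fun a _ => hνa a, hsumν, ENNReal.toReal_one]
  have hmR : m.toReal = ∑ a : α, min (f a) (g a) := by
    rw [hmdef, ENNReal.toReal_sum fun a _ => hca a]
    exact Finset.sum_congr rfl fun a _ => hcR a
  by_cases hcase : m = 1
  · -- μ = ν, take the diagonal coupling
    have hfg : ∀ a : α, f a = g a := by
      have hle : ∀ a ∈ Finset.univ, min (f a) (g a) ≤ f a :=
        fun a _ => min_le_left _ _
      have heq : ∑ a : α, min (f a) (g a) = ∑ a : α, f a := by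
        rw [hfsum, ← hmR, hcase, ENNReal.toReal_one]
      have h1 := (Finset.sum_eq_sum_iff_of_le hle).1 heq
      have hle' : ∀ a ∈ Finset.univ, min (f a) (g a) ≤ g a :=
        fun a _ => min_le_right _ _
      have heq' : ∑ a : α, min (f a) (g a) = ∑ a : α, g a := by
        rw [hgsum, ← hmR, hcase, ENNReal.toReal_one]
      have h2 := (Finset.sum_eq_sum_iff_of_le hle').1 heq'
      intro a
      rw [← h1 a (Finset.mem_univ a)]
      exact h2 a (Finset.mem_univ a)
    have hμν : μ = ν := by
      refine Measure.ext fun S _ => ?_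
      rw [meas_eq_sum μ S, meas_eq_sum ν S]
      refine Finset.sum_congr rfl fun a _ => ?_
      exact (ENNReal.toReal_eq_toReal_iff' (hμa a) (hνa a)).1 (hfg a)
    have hdiagm : Measurable fun a : α => (a, a) :=
      measurable_id.prodMk measurable_id
    set π : Measure (α × α) := μ.map (fun a => (a, a)) with hπdef
    haveI : IsProbabilityMeasure π := Measure.isProbabilityMeasure_map hdiagm.aemeasurable
    have hfst : π.map Prod.fst = μ := by
      rw [hπdef, Measure.map_map measurable_fst hdiagm]
      simp [Function.comp_def]
    have hsnd : π.map Prod.snd = ν := by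
      rw [hπdef, Measure.map_map measurable_snd hdiagm]
      simp [Function.comp_def, hμν]
    have hcoup : IsCoupling π μ ν := ⟨inferInstance, hfst, hsnd⟩
    have hoff : π {p : α × α | p.1 ≠ p.2} = 0 := by
      rw [hπdef, Measure.map_apply hdiagm .of_discrete]
      convert measure_empty (μ := μ)
      ext a; simp
    refine ⟨π, hcoup, ?_, fun π' h' => dTV_le_coupling μ ν π' h'⟩
    rw [hoff]
    have h1 : dTV μ ν ≤ 0 := by
      have := dTV_le_coupling μ ν π hcoup
      rwa [hoff] at this
    have h2 : 0 ≤ dTV μ ν := dTV_nonneg μ ν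
    simpa using (le_antisymm h2 h1)
  · -- the interesting case : m < 1
    have hlt : m < 1 := lt_of_le_of_ne hm1 hcase
    have h1m0 : (1 : ℝ≥0∞) - m ≠ 0 := by
      rw [Ne, tsub_eq_zero_iff_le]
      exact not_le.2 hlt
    have h1mtop : (1 : ℝ≥0∞) - m ≠ ∞ :=
      ne_top_of_le_ne_top ENNReal.one_ne_top tsub_le_self
    set r : ℝ≥0∞ := ((1 : ℝ≥0∞) - m)⁻¹ with hr
    have hrmul : r * ((1 : ℝ≥0∞) - m) = 1 := ENNReal.inv_mul_cancel h1m0 h1mtop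
    set μ' : Measure α := μ - p with hμ'def
    set ν' : Measure α := ν - p with hν'def
    haveI : IsFiniteMeasure μ' := Measure.isFiniteMeasure_sub
    haveI : IsFiniteMeasure ν' := Measure.isFiniteMeasure_sub
    have hμ'app : ∀ S : Set α, μ' S = μ S - p S := fun S =>
      Measure.sub_apply .of_discrete hpμ
    have hν'app : ∀ S : Set α, ν' S = ν S - p S := fun S =>
      Measure.sub_apply .of_discrete hpν
    have hμ'univ : μ' Set.univ = 1 - m := by
      rw [hμ'app, hpuniv, measure_univ]
    have hν'univ : ν' Set.univ = 1 - m := by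
      rw [hν'app, hpuniv, measure_univ]
    have hsingfin : ∀ a : α, ({a} : Set α).toFinite.toFinset = {a} := by
      intro a; ext b
      rw [Set.Finite.mem_toFinset, Set.mem_singleton_iff, Finset.mem_singleton]
    have hμ'a : ∀ a : α, μ' {a} = μ {a} - c a := by
      intro a
      rw [hμ'app]
      congr 1
      rw [hpapp, hsingfin, Finset.sum_singleton]
    have hν'a : ∀ a : α, ν' {a} = ν {a} - c a := by
      intro a
      rw [hν'app]
      congr 1
      rw [hpapp, hsingfin, Finset.sum_singleton]
    have hzero : ∀ a : α, μ' {a} * ν' {a} = 0 := by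
      intro a
      rcases le_total (μ {a}) (ν {a}) with h | h
      · rw [hμ'a, hc]
        simp [min_eq_left h]
      · rw [hν'a, hc]
        simp [min_eq_right h]
    set Q : Measure (α × α) := μ'.prod ν' with hQdef
    set D : Measure (α × α) := ∑ a : α, c a • Measure.dirac (a, a) with hDdef
    set π : Measure (α × α) := D + r • Q with hπdef
    -- marginals of D
    have hDfst : D.map Prod.fst = p := by
      refine Measure.ext fun S hS => ?_
      rw [Measure.map_apply measurable_fst hS, hDdef, hpdef,
        Measure.finset_sum_apply, Measure.finset_sum_apply]
      refine Finset.sum_congr rfl fun a _ => ?_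
      rw [Measure.smul_apply, Measure.smul_apply,
        Measure.dirac_apply' _ (hS.preimage measurable_fst), Measure.dirac_apply' _ hS]
      by_cases haS : a ∈ S <;> simp [Set.indicator_apply, haS]
    have hDsnd : D.map Prod.snd = p := by
      refine Measure.ext fun S hS => ?_
      rw [Measure.map_apply measurable_snd hS, hDdef, hpdef,
        Measure.finset_sum_apply, Measure.finset_sum_apply]
      refine Finset.sum_congr rfl fun a _ => ?_
      rw [Measure.smul_apply, Measure.smul_apply,
        Measure.dirac_apply' _ (hS.preimage measurable_snd), Measure.dirac_apply' _ hS]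
      by_cases haS : a ∈ S <;> simp [Set.indicator_apply, haS]
    -- marginals of π
    have hfst : π.map Prod.fst = μ := by
      rw [hπdef, Measure.map_add _ _ measurable_fst, Measure.map_smul, hDfst,
        Measure.map_fst_prod, hν'univ, smul_smul, hrmul, one_smul,
        add_comm]
      exact Measure.sub_add_cancel_of_le hpμ
    have hsnd : π.map Prod.snd = ν := by
      rw [hπdef, Measure.map_add _ _ measurable_snd, Measure.map_smul, hDsnd,
        Measure.map_snd_prod, hμ'univ, smul_smul, hrmul, one_smul,
        add_comm]
      exact Measure.sub_add_cancel_of_le hpν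
    haveI hπprob : IsProbabilityMeasure π := by
      constructor
      have : π Set.univ = (π.map Prod.fst) Set.univ := by
        rw [Measure.map_apply measurable_fst .univ, Set.preimage_univ]
      rw [this, hfst, measure_univ]
    have hcoup : IsCoupling π μ ν := ⟨hπprob, hfst, hsnd⟩
    -- mass of the off-diagonal
    have hQdiag : Q (Set.diagonal α) = 0 := by
      rw [meas_eq_sum]
      refine Finset.sum_eq_zero fun x hx => ?_
      have hxd : x.1 = x.2 := by
        have := (Set.Finite.mem_toFinset _).1 hx
        exact this
      have hxs : ({x} : Set (α × α)) = {x.1} ×ˢ {x.2} := by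
        rw [Set.singleton_prod_singleton]
      rw [hQdef, hxs, Measure.prod_prod, ← hxd]
      exact hzero x.1
    have hQuniv : Q Set.univ = ((1:ℝ≥0∞) - m) * ((1:ℝ≥0∞) - m) := by
      rw [hQdef, ← Set.univ_prod_univ, Measure.prod_prod, hμ'univ, hν'univ]
    have hQoff : Q (Set.diagonal α)ᶜ = ((1:ℝ≥0∞) - m) * ((1:ℝ≥0∞) - m) := by
      have := measure_add_measure_compl (μ := Q) (s := Set.diagonal α) .of_discrete
      rw [hQdiag, zero_add] at this
      rw [this, hQuniv]
    have hDoff : D (Set.diagonal α)ᶜ = 0 := by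
      rw [hDdef, Measure.finset_sum_apply]
      refine Finset.sum_eq_zero fun a _ => ?_
      rw [Measure.smul_apply, Measure.dirac_apply' _ .of_discrete, smul_eq_mul,
        Set.indicator_of_notMem, mul_zero]
      simp [Set.diagonal]
    have hsetoff : {p : α × α | p.1 ≠ p.2} = (Set.diagonal α)ᶜ := by
      ext x; simp [Set.diagonal, Set.mem_compl_iff]
    have hπoff : π {p : α × α | p.1 ≠ p.2} = 1 - m := by
      rw [hsetoff, hπdef, Measure.add_apply, Measure.smul_apply, hDoff, hQoff,
        zero_add, smul_eq_mul, ← mul_assoc, hrmul, one_mul]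
    have hπoffR : (π {p : α × α | p.1 ≠ p.2}).toReal = 1 - m.toReal := by
      rw [hπoff, ENNReal.toReal_sub_of_le hm1 ENNReal.one_ne_top, ENNReal.toReal_one]
    -- the lower bound for dTV via the set S₀
    set S₀ : Set α := {a : α | ν {a} < μ {a}} with hS₀
    have hmemS₀ : ∀ a : α, a ∈ S₀ ↔ g a < f a := by
      intro a
      rw [hS₀, Set.mem_setOf_eq, hf, hg]
      exact (ENNReal.toReal_lt_toReal (hνa a) (hμa a)).symm
    have hkey : (μ S₀).toReal - (ν S₀).toReal = 1 - m.toReal := by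
      have hμS : (μ S₀).toReal = ∑ a ∈ S₀.toFinite.toFinset, f a := by
        rw [meas_eq_sum μ S₀, ENNReal.toReal_sum fun a _ => hμa a]
      have hνS : (ν S₀).toReal = ∑ a ∈ S₀.toFinite.toFinset, g a := by
        rw [meas_eq_sum ν S₀, ENNReal.toReal_sum fun a _ => hνa a]
      have step1 : ∑ a ∈ S₀.toFinite.toFinset, (f a - g a)
          = ∑ a ∈ S₀.toFinite.toFinset, (f a - min (f a) (g a)) := by
        refine Finset.sum_congr rfl fun a ha => ?_
        have : g a < f a := (hmemS₀ a).1 ((Set.Finite.mem_toFinset _).1 ha)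
        rw [min_eq_right this.le]
      have step2 : ∑ a ∈ S₀.toFinite.toFinset, (f a - min (f a) (g a))
          = ∑ a : α, (f a - min (f a) (g a)) := by
        refine Finset.sum_subset (Finset.subset_univ _) fun a _ ha => ?_
        have : ¬ g a < f a := fun h => ha ((Set.Finite.mem_toFinset _).2 ((hmemS₀ a).2 h))
        rw [min_eq_left (not_lt.1 this), sub_self]
      rw [hμS, hνS, ← Finset.sum_sub_distrib, step1, step2,
        Finset.sum_sub_distrib, hfsum, hmR]
    have hlow : 1 - m.toReal ≤ dTV μ ν := by
      have h1 : |(μ S₀).toReal - (ν S₀).toReal| ≤ dTV μ ν :=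
        le_ciSup (bddAbove_dTV μ ν) S₀
      calc 1 - m.toReal = (μ S₀).toReal - (ν S₀).toReal := hkey.symm
      _ ≤ |(μ S₀).toReal - (ν S₀).toReal| := le_abs_self _
      _ ≤ dTV μ ν := h1
    refine ⟨π, hcoup, ?_, fun π' h' => dTV_le_coupling μ ν π' h'⟩
    refine le_antisymm ?_ (dTV_le_coupling μ ν π hcoup)
    rw [hπoffR]
    exact hlow
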